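/- For every positive integer N and p in (0, 1/N), the Abelian distribution is a probability distribution: the sum over b from 1 to N of C_{N,p} * binomial(N-1, b-1) * p^{b-1} * (1-b*p)^{N-b-1} * b^{b-2} equals 1, where C_{N,p} = (1-N*p)/(1-(N-1)*p). -/

import Mathlib

lemma diff_zero : ∀ n : ℕ, ∀ j : ℕ, j < n →
    ∑ k ∈ Finset.range (n+1), (-1:ℝ)^k * (n.choose k) * (k:ℝ)^j = 0 := by
  intro n
  induction n with
  | zero => intro j hj; omega
  | succ n IH =>
    intro j hj
    have hg : ∑ k ∈ Finset.range (n+2), (-1:ℝ)^k * (n.choose k) * (k:ℝ)^j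
        = ∑ k ∈ Finset.range (n+1), (-1:ℝ)^k * (n.choose k) * (k:ℝ)^j := by
      rw [Finset.sum_range_succ, Nat.choose_succ_self]
      simp
    have step : ∑ k ∈ Finset.range (n+2), (-1:ℝ)^k * ((n+1).choose k) * (k:ℝ)^j
        = ∑ i ∈ Finset.range (n+1), (-1:ℝ)^i * (n.choose i) * ((i:ℝ)^j - ((i:ℝ)+1)^j) := by
      rw [Finset.sum_range_succ' (fun k => (-1:ℝ)^k * ((n+1).choose k) * (k:ℝ)^j)]
      rw [Finset.sum_range_succ' (fun k => (-1:ℝ)^k * (n.choose k) * (k:ℝ)^j)] at hg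
      have h1 : ∀ i ∈ Finset.range (n+1),
          (-1:ℝ)^(i+1) * ((n+1).choose (i+1)) * ((i+1:ℕ):ℝ)^j
          = -((-1:ℝ)^i * (n.choose i) * ((i:ℝ)+1)^j)
            + (-1:ℝ)^(i+1) * (n.choose (i+1)) * ((i+1:ℕ):ℝ)^j := by
        intro i _
        rw [Nat.choose_succ_succ]
        push_cast
        ring
      rw [Finset.sum_congr rfl h1, Finset.sum_add_distrib]
      have h2 : ∑ i ∈ Finset.range (n+1), (-1:ℝ)^(i+1) * (n.choose (i+1)) * ((i+1:ℕ):ℝ)^j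
          = ∑ k ∈ Finset.range (n+1), (-1:ℝ)^k * (n.choose k) * (k:ℝ)^j
            - (-1:ℝ)^0 * (n.choose 0) * ((0:ℕ):ℝ)^j := by
        rw [← hg]; ring
      rw [h2]
      have comb : ∑ i ∈ Finset.range (n+1),
          (-((-1:ℝ)^i * (n.choose i) * ((i:ℝ)+1)^j) + (-1:ℝ)^i * (n.choose i) * (i:ℝ)^j)
          = ∑ i ∈ Finset.range (n+1), (-1:ℝ)^i * (n.choose i) * ((i:ℝ)^j - ((i:ℝ)+1)^j) :=
        Finset.sum_congr rfl fun i _ => by ring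
      rw [← comb, Finset.sum_add_distrib]
      simp only [Nat.choose_zero_right, pow_zero, Nat.cast_zero, Nat.cast_one]
      ring
    rw [step]
    have expand : ∀ i : ℕ, ((i:ℝ)+1)^j = ∑ r ∈ Finset.range (j+1), (i:ℝ)^r * (j.choose r) := by
      intro i
      rw [add_pow]
      exact Finset.sum_congr rfl fun r _ => by rw [one_pow, mul_one]
    have h3 : ∀ i ∈ Finset.range (n+1),
        (-1:ℝ)^i * (n.choose i) * ((i:ℝ)^j - ((i:ℝ)+1)^j)
        = ∑ r ∈ Finset.range j, -((j.choose r : ℝ) * ((-1:ℝ)^i * (n.choose i) * (i:ℝ)^r)) := by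
      intro i _
      rw [expand i, Finset.sum_range_succ, Nat.choose_self]
      have e : (↑i:ℝ)^j - (∑ x ∈ Finset.range j, (↑i:ℝ)^x * (j.choose x) + (↑i:ℝ)^j * ((1:ℕ):ℝ))
          = -∑ x ∈ Finset.range j, (↑i:ℝ)^x * (j.choose x) := by
        push_cast; ring
      rw [e, mul_neg, Finset.mul_sum, ← Finset.sum_neg_distrib]
      exact Finset.sum_congr rfl fun r _ => by ring
    rw [Finset.sum_congr rfl h3, Finset.sum_comm]
    apply Finset.sum_eq_zero
    intro r hr
    have hIH : ∑ i ∈ Finset.range (n+1), (-1:ℝ)^i * (n.choose i) * (i:ℝ)^r = 0 :=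
      IH r (by simp at hr; omega)
    rw [Finset.sum_neg_distrib, ← Finset.mul_sum, hIH, mul_zero, neg_zero]

lemma abelF (p : ℝ) : ∀ n : ℕ, ∀ w : ℝ,
    ∑ k ∈ Finset.range (n+1), (n.choose k : ℝ) * ((k:ℝ)+1)^(k-1) * p^k * (w + ((n:ℝ)-(k:ℝ))*p)^(n-k)
      = (w + ((n:ℝ)+1)*p)^n := by
  intro n
  induction n with
  | zero => intro w; simp
  | succ n IH =>
    intro w
    push_cast
    -- the function F
    set F : ℝ → ℝ := fun w => ∑ k ∈ Finset.range (n+2),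
      ((n+1).choose k : ℝ) * ((k:ℝ)+1)^(k-1) * p^k * (w + ((n:ℝ)+1-(k:ℝ))*p)^(n+1-k) with hF
    have hder : ∀ w : ℝ, HasDerivAt F (((n:ℝ)+1) * (w + ((n:ℝ)+2)*p)^n) w := by
      intro w
      have h1 : ∀ k ∈ Finset.range (n+2), HasDerivAt
          (fun w : ℝ => ((n+1).choose k : ℝ) * ((k:ℝ)+1)^(k-1) * p^k * (w + ((n:ℝ)+1-(k:ℝ))*p)^(n+1-k))
          (((n+1).choose k : ℝ) * ((k:ℝ)+1)^(k-1) * p^k *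
            (((n+1-k:ℕ):ℝ) * (w + ((n:ℝ)+1-(k:ℝ))*p)^(n+1-k-1))) w := by
        intro k _
        have h := (((hasDerivAt_id w).add_const (((n:ℝ)+1-(k:ℝ))*p)).pow (n+1-k)).const_mul
          (((n+1).choose k : ℝ) * ((k:ℝ)+1)^(k-1) * p^k)
        simp only [id_eq] at h
        refine h.congr_deriv ?_
        ring
      have hsum := HasDerivAt.sum h1
      rw [Finset.sum_fn] at hsum
      refine hsum.congr_deriv ?_
      have drop : ∑ k ∈ Finset.range (n+2), ((n+1).choose k : ℝ) * ((k:ℝ)+1)^(k-1) * p^k *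
            (((n+1-k:ℕ):ℝ) * (w + ((n:ℝ)+1-(k:ℝ))*p)^(n+1-k-1))
          = ∑ k ∈ Finset.range (n+1), ((n:ℝ)+1) * ((n.choose k : ℝ) * ((k:ℝ)+1)^(k-1) * p^k *
            ((w+p) + ((n:ℝ)-(k:ℝ))*p)^(n-k)) := by
        rw [Finset.sum_range_succ]
        simp only [Nat.sub_self, Nat.cast_zero, zero_mul, mul_zero, add_zero]
        apply Finset.sum_congr rfl
        intro k hk
        rw [Finset.mem_range] at hk
        have hc : ((n+1).choose k : ℝ) * ((n+1-k:ℕ):ℝ) = ((n:ℝ)+1) * (n.choose k : ℝ) := by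
          have := Nat.choose_mul_succ_eq n k
          have h2 : (n.choose k) * (n+1) = (n+1).choose k * (n+1-k) := this
          have := congrArg (fun x : ℕ => (x:ℝ)) h2
          push_cast at this
          push_cast
          linarith [this]
        have hb : w + ((n:ℝ)+1-(k:ℝ))*p = (w+p) + ((n:ℝ)-(k:ℝ))*p := by ring
        have he : n+1-k-1 = n-k := by omega
        rw [hb, he]
        calc ((n+1).choose k : ℝ) * ((k:ℝ)+1)^(k-1) * p^k *
              (((n+1-k:ℕ):ℝ) * ((w+p) + ((n:ℝ)-(k:ℝ))*p)^(n-k))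
            = (((n+1).choose k : ℝ) * ((n+1-k:ℕ):ℝ)) * (((k:ℝ)+1)^(k-1) * p^k *
              ((w+p) + ((n:ℝ)-(k:ℝ))*p)^(n-k)) := by ring
          _ = _ := by rw [hc]; ring
      rw [drop, ← Finset.mul_sum, IH (w+p)]
      have : ((w+p) + ((n:ℝ)+1)*p)^n = (w + ((n:ℝ)+2)*p)^n := by congr 1; ring
      rw [this]
    have hg : ∀ w : ℝ, HasDerivAt (fun w => F w - (w + ((n:ℝ)+2)*p)^(n+1)) 0 w := by
      intro w
      have h2 := (hasDerivAt_id w).add_const (((n:ℝ)+2)*p)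
      have h3 := h2.pow (n+1)
      simp only [id_eq] at h3
      have h4 := (hder w).sub h3
      refine h4.congr_deriv ?_
      rw [show n+1-1 = n by omega]
      push_cast
      ring
    have hdiff : Differentiable ℝ (fun w => F w - (w + ((n:ℝ)+2)*p)^(n+1)) :=
      fun w => (hg w).differentiableAt
    have hconst := is_const_of_deriv_eq_zero hdiff (fun w => (hg w).deriv)
    have anchor : F (-(((n:ℝ)+2)*p)) = 0 := by
      rw [hF]
      simp only
      have e1 : ∀ k ∈ Finset.range (n+2),
          ((n+1).choose k : ℝ) * ((k:ℝ)+1)^(k-1) * p^k *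
            ((-(((n:ℝ)+2)*p)) + ((n:ℝ)+1-(k:ℝ))*p)^(n+1-k)
          = ((-1:ℝ)^(n+1)*p^(n+1)) * ((-1:ℝ)^k * ((n+1).choose k : ℝ) * ((k:ℝ)+1)^n) := by
        intro k hk
        rw [Finset.mem_range] at hk
        have hb : (-(((n:ℝ)+2)*p)) + ((n:ℝ)+1-(k:ℝ))*p = -(((k:ℝ)+1)*p) := by ring
        rw [hb, neg_pow, mul_pow]
        have hm : ((k:ℝ)+1)^(k-1) * ((k:ℝ)+1)^(n+1-k) = ((k:ℝ)+1)^n := by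
          rcases Nat.eq_zero_or_pos k with h0|h0
          · subst h0; norm_num
          · rw [← pow_add]; congr 1; omega
        have hp1 : p^k * p^(n+1-k) = p^(n+1) := by rw [← pow_add]; congr 1; omega
        have h2 : ((-1:ℝ)^k * (-1:ℝ)^k) = 1 := by
          rw [← pow_add]; exact Even.neg_one_pow ⟨k, rfl⟩
        have hs : (-1:ℝ)^(n+1-k) = (-1:ℝ)^(n+1) * (-1:ℝ)^k := by
          calc (-1:ℝ)^(n+1-k) = (-1:ℝ)^(n+1-k) * ((-1:ℝ)^k * (-1:ℝ)^k) := by rw [h2, mul_one]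
            _ = ((-1:ℝ)^(n+1-k) * (-1:ℝ)^k) * (-1:ℝ)^k := by ring
            _ = (-1:ℝ)^(n+1) * (-1:ℝ)^k := by
                rw [← pow_add, show n+1-k+k = n+1 by omega]
        calc ((n+1).choose k : ℝ) * ((k:ℝ)+1)^(k-1) * p^k *
              ((-1:ℝ)^(n+1-k) * (((k:ℝ)+1)^(n+1-k) * p^(n+1-k)))
            = (((k:ℝ)+1)^(k-1) * ((k:ℝ)+1)^(n+1-k)) * (p^k * p^(n+1-k)) *
              ((-1:ℝ)^(n+1-k) * ((n+1).choose k : ℝ)) := by ring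
          _ = _ := by rw [hm, hp1, hs]; ring
      rw [Finset.sum_congr rfl e1, ← Finset.mul_sum]
      have hzero : ∑ k ∈ Finset.range (n+2),
          (-1:ℝ)^k * ((n+1).choose k : ℝ) * ((k:ℝ)+1)^n = 0 := by
        have e2 : ∀ k ∈ Finset.range (n+2), (-1:ℝ)^k * ((n+1).choose k : ℝ) * ((k:ℝ)+1)^n
            = ∑ r ∈ Finset.range (n+1), (n.choose r : ℝ) *
                ((-1:ℝ)^k * ((n+1).choose k : ℝ) * (k:ℝ)^r) := by
          intro k _
          rw [add_pow, Finset.mul_sum]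
          apply Finset.sum_congr rfl
          intro r _
          rw [one_pow]
          ring
        rw [Finset.sum_congr rfl e2, Finset.sum_comm]
        apply Finset.sum_eq_zero
        intro r hr
        rw [← Finset.mul_sum, diff_zero (n+1) r (by simpa using hr), mul_zero]
      rw [hzero, mul_zero]
    have hw0 := hconst w (-(((n:ℝ)+2)*p))
    have hz : ((-(((n:ℝ)+2)*p)) + ((n:ℝ)+2)*p)^(n+1) = 0 := by
      rw [show (-(((n:ℝ)+2)*p)) + ((n:ℝ)+2)*p = 0 by ring]
      exact zero_pow (by omega)
    have hFw : F w = (w + ((n:ℝ)+2)*p)^(n+1) := by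
      rw [anchor, hz] at hw0; linarith
    rw [show w + ((n:ℝ)+1+1)*p = w + ((n:ℝ)+2)*p by ring]
    exact hFw


/-- Density of the Abelian distribution with parameters `N` and `p`,
evaluated at `b`. -/
noncomputable def abelianP (N : ℕ) (p : ℝ) (b : ℕ) : ℝ :=
  ((1 - N * p) / (1 - ((N : ℝ) - 1) * p)) * ((N - 1).choose (b - 1)) *
    p ^ (b - 1) * (1 - b * p) ^ ((N : ℤ) - b - 1) * (b : ℝ) ^ ((b : ℤ) - 2)

theorem abelian_is_distribution (N : ℕ) (hN : 0 < N) (p : ℝ)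
    (hp : 0 < p) (hp' : p < 1 / N) :
    ∑ b ∈ Finset.Icc 1 N, abelianP N p b = 1 := by
  obtain ⟨n, rfl⟩ : ∃ n, N = n+1 := ⟨N-1, by omega⟩
  have hple : ((n:ℝ)+1) * p < 1 := by
    have hN0 : (0:ℝ) < ((n:ℕ)+1 : ℕ) := by positivity
    rw [lt_div_iff₀ (by push_cast at hN0 ⊢; linarith)] at hp'
    push_cast at hp'
    linarith
  have hpos : ∀ k : ℕ, k ≤ n → 0 < 1 - ((k:ℝ)+1)*p := by
    intro k hk
    have : ((k:ℝ)+1)*p ≤ ((n:ℝ)+1)*p := by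
      have : (k:ℝ) ≤ (n:ℝ) := by exact_mod_cast hk
      nlinarith
    linarith
  have hy0 : 0 < 1 - ((n:ℝ)+1)*p := by linarith
  have hnp : 0 < 1 - (n:ℝ)*p := by nlinarith [hp]
  -- the zpow-terms
  set zt : ℕ → ℝ := fun k => (n.choose k : ℝ) * ((k:ℝ)+1)^(k-1) * p^k *
      (1 - ((k:ℝ)+1)*p)^((n:ℤ)-(k:ℤ)-1) with hzt
  -- E1
  have E1 : ∑ k ∈ Finset.range (n+1), (n.choose k : ℝ) * ((k:ℝ)+1)^(k-1) * p^k *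
      (1 - ((k:ℝ)+1)*p)^(n-k) = 1 := by
    have h := abelF p n (1 - ((n:ℝ)+1)*p)
    have hb : ∀ k ∈ Finset.range (n+1),
        (n.choose k : ℝ) * ((k:ℝ)+1)^(k-1) * p^k *
          ((1 - ((n:ℝ)+1)*p) + ((n:ℝ)-(k:ℝ))*p)^(n-k)
        = (n.choose k : ℝ) * ((k:ℝ)+1)^(k-1) * p^k * (1 - ((k:ℝ)+1)*p)^(n-k) := by
      intro k _
      rw [show (1 - ((n:ℝ)+1)*p) + ((n:ℝ)-(k:ℝ))*p = 1 - ((k:ℝ)+1)*p by ring]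
    rw [Finset.sum_congr rfl hb] at h
    rw [h, show (1 - ((n:ℝ)+1)*p) + ((n:ℝ)+1)*p = 1 by ring, one_pow]
  -- split each natural power into zpow * linear factor
  have split : ∀ k ∈ Finset.range (n+1),
      (n.choose k : ℝ) * ((k:ℝ)+1)^(k-1) * p^k * (1 - ((k:ℝ)+1)*p)^(n-k)
      = (1 - ((n:ℝ)+1)*p) * zt k + p * (((n:ℝ)-(k:ℝ)) * zt k) := by
    intro k hk
    rw [Finset.mem_range] at hk
    have hk' : k ≤ n := by omega
    have hz : (1 - ((k:ℝ)+1)*p) ≠ 0 := ne_of_gt (hpos k hk')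
    have e : (1 - ((k:ℝ)+1)*p)^(n-k : ℕ)
        = (1 - ((k:ℝ)+1)*p)^((n:ℤ)-(k:ℤ)-1) * (1 - ((k:ℝ)+1)*p) := by
      rw [← zpow_natCast (1 - ((k:ℝ)+1)*p) (n-k),
        show ((n-k : ℕ) : ℤ) = ((n:ℤ)-(k:ℤ)-1) + 1 by omega,
        zpow_add_one₀ hz]
    rw [hzt]
    simp only
    rw [e]
    ring
  rw [Finset.sum_congr rfl split, Finset.sum_add_distrib] at E1
  rw [← Finset.mul_sum, ← Finset.mul_sum] at E1
  -- second sum equals n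
  have S2 : ∑ k ∈ Finset.range (n+1), ((n:ℝ)-(k:ℝ)) * zt k = (n:ℝ) := by
    rcases Nat.eq_zero_or_pos n with h0|h0
    · subst h0; simp [hzt]
    · rw [Finset.sum_range_succ, sub_self, zero_mul, add_zero]
      have hb2 : ∀ k ∈ Finset.range n,
          ((n:ℝ)-(k:ℝ)) * zt k
          = (n:ℝ) * (((n-1).choose k : ℝ) * ((k:ℝ)+1)^(k-1) * p^k *
              ((1 - (n:ℝ)*p) + (((n-1:ℕ):ℝ)-(k:ℝ))*p)^(n-1-k)) := by
        intro k hk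
        rw [Finset.mem_range] at hk
        have hc : ((n:ℝ)-(k:ℝ)) * (n.choose k : ℝ) = (n:ℝ) * ((n-1).choose k : ℝ) := by
          have h2 : (n-1).choose k * n = n.choose k * (n-k) := by
            have h := Nat.choose_mul_succ_eq (n-1) k
            rw [show n-1+1 = n by omega] at h
            exact h
          have h3 := congrArg (fun x : ℕ => (x:ℝ)) h2
          push_cast [Nat.cast_sub (le_of_lt hk)] at h3
          linarith
        have hzp : (1 - ((k:ℝ)+1)*p)^((n:ℤ)-(k:ℤ)-1) = (1 - ((k:ℝ)+1)*p)^(n-1-k : ℕ) := by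
          rw [← zpow_natCast (1 - ((k:ℝ)+1)*p) (n-1-k)]
          congr 1
          omega
        have hbase : (1 - (n:ℝ)*p) + (((n-1:ℕ):ℝ)-(k:ℝ))*p = 1 - ((k:ℝ)+1)*p := by
          rw [Nat.cast_sub h0]
          push_cast
          ring
        rw [hbase, hzt]
        simp only
        rw [hzp]
        calc ((n:ℝ)-(k:ℝ)) * ((n.choose k : ℝ) * ((k:ℝ)+1)^(k-1) * p^k *
              (1 - ((k:ℝ)+1)*p)^(n-1-k : ℕ))
            = (((n:ℝ)-(k:ℝ)) * (n.choose k : ℝ)) * (((k:ℝ)+1)^(k-1) * p^k *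
              (1 - ((k:ℝ)+1)*p)^(n-1-k : ℕ)) := by ring
          _ = _ := by rw [hc]; ring
      rw [Finset.sum_congr rfl hb2, ← Finset.mul_sum]
      have h := abelF p (n-1) (1 - (n:ℝ)*p)
      rw [show n-1+1 = n by omega] at h
      rw [h, show (1 - (n:ℝ)*p) + (((n-1:ℕ):ℝ)+1)*p = 1 by
        rw [Nat.cast_sub h0]; push_cast; ring, one_pow, mul_one]
  rw [S2] at E1
  -- E1 : (1-(n+1)p) * T + p * n = 1
  have hT : ∑ k ∈ Finset.range (n+1), zt k = (1 - (n:ℝ)*p) / (1 - ((n:ℝ)+1)*p) := by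
    rw [eq_div_iff (ne_of_gt hy0)]
    linarith [E1]
  -- final: rewrite the goal
  have reindex : ∑ b ∈ Finset.Icc 1 (n+1), abelianP (n+1) p b
      = ∑ k ∈ Finset.range (n+1), abelianP (n+1) p (1+k) := by
    rw [← Finset.Ico_add_one_right_eq_Icc, Finset.sum_Ico_eq_sum_range,
      show n+1+1-1 = n+1 by omega]
  rw [reindex]
  have term : ∀ k ∈ Finset.range (n+1), abelianP (n+1) p (1+k)
      = ((1 - ((n:ℝ)+1)*p) / (1 - (n:ℝ)*p)) * zt k := by
    intro k hk
    rw [Finset.mem_range] at hk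
    unfold abelianP
    rw [hzt]
    simp only
    rw [show (1+k) - 1 = k by omega, show (n+1) - 1 = n by omega]
    have c1 : ((n+1:ℕ):ℝ) = (n:ℝ)+1 := by push_cast; ring
    have c2 : ((1+k:ℕ):ℝ) = (k:ℝ)+1 := by push_cast; ring
    have c3 : (((n+1:ℕ)):ℤ) - ((1+k:ℕ):ℤ) - 1 = (n:ℤ)-(k:ℤ)-1 := by push_cast; ring
    have c4 : ((1+k:ℕ):ℤ) - 2 = (k:ℤ)-1 := by push_cast; ring
    rw [c1, c2, c3, c4]
    have c5 : ((k:ℝ)+1)^((k:ℤ)-1) = ((k:ℝ)+1)^(k-1 : ℕ) := by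
      rcases Nat.eq_zero_or_pos k with h0|h0
      · subst h0; norm_num
      · rw [← zpow_natCast ((k:ℝ)+1) (k-1)]
        congr 1
        omega
    rw [c5, show (n:ℝ)+1-1 = (n:ℝ) by ring]
    ring
  rw [Finset.sum_congr rfl term, ← Finset.mul_sum, hT]
  field_simp
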